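/- With notation as before, the level K Appell-Lerch sum satisfies A_K(u,v;τ) = K^{-1} z^{(K-1)/2} ∑_{m=0}^{K-1} A_1(u, v/K + m/K + τ(K-1)/(2K); τ/K). -/

import Mathlib

open scoped BigOperators
open Complex

/-- The level `K` Appell-Lerch sum
`A_K(u,v;τ) = z^{K/2} ∑_{n∈ℤ} (-1)^{Kn} q^{Kn(n+1)/2} y^n / (1 - z q^n)`,
with `z = e^{2πiu}`, `y = e^{2πiv}`, `q = e^{2πiτ}`. -/
noncomputable def appell (K : ℕ) (u v τ : ℂ) : ℂ :=
  Complex.exp ((Real.pi : ℂ) * I * K * u) *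
    ∑' n : ℤ,
      ((-1 : ℂ) ^ ((K : ℤ) * n) *
          Complex.exp ((Real.pi : ℂ) * I * τ * K * n * (n + 1)) *
          Complex.exp (2 * (Real.pi : ℂ) * I * v * n)) /
        (1 - Complex.exp (2 * (Real.pi : ℂ) * I * (u + n * τ)))

/-- The `n`-th summand of the level-one Appell-Lerch sum. -/
noncomputable def AL.term1 (u v τ : ℂ) (n : ℤ) : ℂ :=
  ((-1 : ℂ) ^ n * Complex.exp ((Real.pi : ℂ) * I * τ * n * (n + 1)) *
      Complex.exp (2 * (Real.pi : ℂ) * I * v * n)) /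
    (1 - Complex.exp (2 * (Real.pi : ℂ) * I * (u + n * τ)))

/-- The `n`-th summand of the level-`K` Appell-Lerch sum. -/
noncomputable def AL.termK (K : ℕ) (u v τ : ℂ) (n : ℤ) : ℂ :=
  ((-1 : ℂ) ^ ((K : ℤ) * n) *
      Complex.exp ((Real.pi : ℂ) * I * τ * K * n * (n + 1)) *
      Complex.exp (2 * (Real.pi : ℂ) * I * v * n)) /
    (1 - Complex.exp (2 * (Real.pi : ℂ) * I * (u + n * τ)))

lemma AL.appell_eq (K : ℕ) (u v τ : ℂ) :
    appell K u v τ = Complex.exp ((Real.pi : ℂ) * I * K * u) * ∑' n : ℤ, AL.termK K u v τ n :=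
  rfl

lemma AL.appell_one_eq (u v τ : ℂ) :
    appell 1 u v τ = Complex.exp ((Real.pi : ℂ) * I * u) * ∑' n : ℤ, AL.term1 u v τ n := by
  rw [AL.appell_eq]
  norm_num [AL.termK, AL.term1]

lemma AL.norm_w (u τ : ℂ) (n : ℤ) :
    ‖Complex.exp (2 * (Real.pi : ℂ) * I * (u + n * τ))‖
      = Real.exp (-(2 * Real.pi * (u.im + n * τ.im))) := by
  rw [Complex.norm_exp]
  congr 1
  simp [Complex.mul_re, Complex.mul_im, Complex.add_im, Complex.add_re]

lemma AL.summable_term1 (u v τ : ℂ) (hτ : 0 < τ.im) :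
    Summable (fun n : ℤ => AL.term1 u v τ n) := by
  unfold AL.term1
  set t := τ.im with ht
  set A : ℝ := (-Real.log 2 - 2 * Real.pi * u.im) / (2 * Real.pi * t) with hA
  set B : ℝ := (Real.log 2 - 2 * Real.pi * u.im) / (2 * Real.pi * t) with hB
  have hpt : 0 < 2 * Real.pi * t := by positivity
  set s : Set ℤ := {n : ℤ | A < (n : ℝ) ∧ (n : ℝ) < B} with hs_def
  have hs : s.Finite := by
    apply Set.Finite.subset (Set.finite_Icc ⌈A⌉ ⌊B⌋)
    rintro n ⟨h1, h2⟩
    exact Set.mem_Icc.mpr ⟨Int.ceil_le.mpr h1.le, Int.le_floor.mpr h2.le⟩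
  rw [← hs.summable_compl_iff]
  have hsum : Summable (fun n : ↥sᶜ => 2 * ‖jacobiTheta₂_term (n : ℤ) (v + τ / 2) τ‖) :=
    ((((summable_jacobiTheta₂_term_iff (v + τ / 2) τ).mpr hτ).norm).mul_left 2).subtype _
  apply Summable.of_norm_bounded hsum
  rintro ⟨n, hn⟩
  have hnum : ‖(-1 : ℂ) ^ n * Complex.exp ((Real.pi : ℂ) * I * τ * n * (n + 1)) *
      Complex.exp (2 * (Real.pi : ℂ) * I * v * n)‖ = ‖jacobiTheta₂_term n (v + τ / 2) τ‖ := by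
    rw [norm_mul, norm_mul, norm_zpow, norm_neg, norm_one, one_zpow, one_mul,
      ← norm_mul, ← Complex.exp_add, jacobiTheta₂_term]
    congr 2
    ring
  have hw := AL.norm_w u τ n
  simp only [Set.mem_compl_iff, hs_def, Set.mem_setOf_eq, not_and_or, not_lt] at hn
  simp only [Function.comp_apply]
  rw [norm_div, hnum]
  rcases hn with hn | hn
  · have h2 : (2 : ℝ) ≤ ‖Complex.exp (2 * (Real.pi : ℂ) * I * (u + n * τ))‖ := by
      rw [hw]
      have : Real.log 2 ≤ -(2 * Real.pi * (u.im + n * t)) := by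
        rw [hA, le_div_iff₀ hpt] at hn
        nlinarith [hn]
      calc (2:ℝ) = Real.exp (Real.log 2) := (Real.exp_log two_pos).symm
        _ ≤ _ := Real.exp_le_exp.mpr this
    have hden : (1 : ℝ) ≤ ‖1 - Complex.exp (2 * (Real.pi : ℂ) * I * (u + n * τ))‖ := by
      have := norm_sub_norm_le (Complex.exp (2 * (Real.pi : ℂ) * I * (u + n * τ))) 1
      rw [norm_one] at this
      rw [← norm_neg]
      calc (1:ℝ) ≤ ‖Complex.exp (2 * (Real.pi : ℂ) * I * (u + n * τ))‖ - 1 := by linarith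
        _ ≤ _ := by simpa using this
    calc ‖jacobiTheta₂_term n (v + τ / 2) τ‖ /
          ‖1 - Complex.exp (2 * (Real.pi : ℂ) * I * (u + n * τ))‖
        ≤ ‖jacobiTheta₂_term n (v + τ / 2) τ‖ / 1 := by
          apply div_le_div_of_nonneg_left ?_ ?_ hden <;> positivity
      _ ≤ 2 * ‖jacobiTheta₂_term n (v + τ / 2) τ‖ := by
          rw [div_one]; nlinarith [norm_nonneg (jacobiTheta₂_term n (v + τ / 2) τ)]
  · have h2 : ‖Complex.exp (2 * (Real.pi : ℂ) * I * (u + n * τ))‖ ≤ 1 / 2 := by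
      rw [hw]
      have : -(2 * Real.pi * (u.im + n * t)) ≤ -Real.log 2 := by
        rw [hB, div_le_iff₀ hpt] at hn
        nlinarith [hn]
      calc Real.exp (-(2 * Real.pi * (u.im + n * t))) ≤ Real.exp (-Real.log 2) :=
            Real.exp_le_exp.mpr this
        _ = 1 / 2 := by rw [Real.exp_neg, Real.exp_log two_pos, one_div]
    have hden : (1 / 2 : ℝ) ≤ ‖1 - Complex.exp (2 * (Real.pi : ℂ) * I * (u + n * τ))‖ := by
      have := norm_sub_norm_le (1 : ℂ) (Complex.exp (2 * (Real.pi : ℂ) * I * (u + n * τ)))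
      rw [norm_one] at this
      linarith
    rw [div_le_iff₀
      (by linarith : (0:ℝ) < ‖1 - Complex.exp (2 * (Real.pi : ℂ) * I * (u + n * τ))‖)]
    nlinarith [norm_nonneg (jacobiTheta₂_term n (v + τ / 2) τ)]

lemma AL.term1_mul_eq (K : ℕ) (hK : 0 < K) (u v τ : ℂ) (m : ℕ) (n : ℤ) :
    AL.term1 u (v / K + m / K + τ * ((K : ℂ) - 1) / (2 * K)) (τ / K) ((K : ℤ) * n)
      = AL.termK K u v τ n := by
  have hKC : (K : ℂ) ≠ 0 := Nat.cast_ne_zero.mpr hK.ne'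
  rw [AL.term1, AL.termK]
  have hden : (((K : ℤ) * n : ℤ) : ℂ) * (τ / K) = (n : ℂ) * τ := by
    push_cast
    field_simp
  rw [hden]
  congr 1
  conv_lhs => rw [mul_assoc, ← Complex.exp_add]
  conv_rhs => rw [mul_assoc, ← Complex.exp_add]
  have hexp : (Real.pi : ℂ) * I * (τ / K) * (((K : ℤ) * n : ℤ) : ℂ) *
        ((((K : ℤ) * n : ℤ) : ℂ) + 1) +
      2 * (Real.pi : ℂ) * I * (v / K + m / K + τ * ((K : ℂ) - 1) / (2 * K)) *
        (((K : ℤ) * n : ℤ) : ℂ)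
      = ((Real.pi : ℂ) * I * τ * K * n * (n + 1) + 2 * (Real.pi : ℂ) * I * v * n)
        + ((m * n : ℤ) : ℂ) * (2 * (Real.pi : ℂ) * I) := by
    push_cast
    field_simp
    ring
  rw [hexp, Complex.exp_add, Complex.exp_int_mul_two_pi_mul_I, mul_one]

lemma AL.sum_term1_eq_zero (K : ℕ) (hK : 0 < K) (u v τ : ℂ) (n : ℤ)
    (hn : ¬ ((K : ℤ) ∣ n)) :
    ∑ m ∈ Finset.range K, AL.term1 u (v / K + m / K + τ * ((K : ℂ) - 1) / (2 * K)) (τ / K) n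
      = 0 := by
  have hKC : (K : ℂ) ≠ 0 := Nat.cast_ne_zero.mpr hK.ne'
  have hπ : (2 * (Real.pi : ℂ) * I : ℂ) ≠ 0 := by
    simp [Real.pi_ne_zero, Complex.I_ne_zero, Complex.ofReal_ne_zero]
  set ζ : ℂ := Complex.exp (2 * (Real.pi : ℂ) * I * n / K) with hζ
  set N : ℂ := (-1 : ℂ) ^ n * Complex.exp ((Real.pi : ℂ) * I * (τ / K) * n * (n + 1)) *
      Complex.exp (2 * (Real.pi : ℂ) * I * (v / K + τ * ((K : ℂ) - 1) / (2 * K)) * n) with hN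
  set D : ℂ := 1 - Complex.exp (2 * (Real.pi : ℂ) * I * (u + n * (τ / K))) with hD
  have hm : ∀ m : ℕ,
      AL.term1 u (v / K + m / K + τ * ((K : ℂ) - 1) / (2 * K)) (τ / K) n = N / D * ζ ^ m := by
    intro m
    have hb : Complex.exp (2 * (Real.pi : ℂ) * I * (v / K + m / K + τ * ((K : ℂ) - 1) / (2 * K)) * n)
        = Complex.exp (2 * (Real.pi : ℂ) * I * (v / K + τ * ((K : ℂ) - 1) / (2 * K)) * n) *
          Complex.exp ((m : ℂ) * (2 * (Real.pi : ℂ) * I * n / K)) := by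
      rw [← Complex.exp_add]
      congr 1
      ring
    rw [AL.term1, hb, hζ, ← Complex.exp_nat_mul, hN, hD]
    ring
  have hζK : ζ ^ K = 1 := by
    rw [hζ, ← Complex.exp_nat_mul]
    rw [show (K : ℂ) * (2 * (Real.pi : ℂ) * I * n / K) = (n : ℤ) * (2 * (Real.pi : ℂ) * I) by
      push_cast; field_simp]
    exact Complex.exp_int_mul_two_pi_mul_I n
  have hζ1 : ζ ≠ 1 := by
    intro h
    rw [hζ, Complex.exp_eq_one_iff] at h
    obtain ⟨k, hk⟩ := h
    apply hn
    refine ⟨k, ?_⟩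
    rw [mul_comm]
    have h2 : (2 * (Real.pi : ℂ) * I) * (n : ℂ) = (2 * (Real.pi : ℂ) * I) * ((k : ℂ) * K) := by
      rw [div_eq_iff hKC] at hk
      linear_combination hk
    have h3 := mul_left_cancel₀ hπ h2
    exact_mod_cast h3
  simp only [hm]
  rw [← Finset.mul_sum, geom_sum_eq hζ1, hζK, sub_self, zero_div, mul_zero]

theorem appell_level_K_eq_inv_K_sum_level_one (K : ℕ) (hK : 0 < K) (u v τ : ℂ)
    (hτ : 0 < τ.im)
    (hz : ∀ n : ℤ, 1 - Complex.exp (2 * (Real.pi : ℂ) * I * (u + n * τ)) ≠ 0) :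
    appell K u v τ =
      (K : ℂ)⁻¹ * Complex.exp ((Real.pi : ℂ) * I * ((K : ℂ) - 1) * u) *
        ∑ m ∈ Finset.range K,
          appell 1 u (v / K + m / K + τ * ((K : ℂ) - 1) / (2 * K)) (τ / K) := by
  have hKC : (K : ℂ) ≠ 0 := Nat.cast_ne_zero.mpr hK.ne'
  have hKZ : (K : ℤ) ≠ 0 := by exact_mod_cast hK.ne'
  have hτK : 0 < (τ / K).im := by
    have h1 : ((K : ℕ) : ℂ) = ((K : ℝ) : ℂ) := by push_cast; ring
    rw [h1, Complex.div_ofReal_im]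
    exact div_pos hτ (by exact_mod_cast hK)
  have hsummable : ∀ m : ℕ,
      Summable (fun n : ℤ =>
        AL.term1 u (v / K + m / K + τ * ((K : ℂ) - 1) / (2 * K)) (τ / K) n) :=
    fun m => AL.summable_term1 u _ (τ / K) hτK
  -- rewrite the right-hand side
  simp only [AL.appell_one_eq]
  rw [← Finset.mul_sum]
  have key : ∑ m ∈ Finset.range K,
      ∑' n : ℤ, AL.term1 u (v / K + m / K + τ * ((K : ℂ) - 1) / (2 * K)) (τ / K) n
      = (K : ℂ) * ∑' n : ℤ, AL.termK K u v τ n := by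
    rw [← Summable.tsum_finsetSum (fun m _ => hsummable m)]
    have hinj : Function.Injective (fun n : ℤ => (K : ℤ) * n) :=
      fun a b h => by simpa [hKZ, hK.ne'] using h
    have hvanish : Function.support (fun n : ℤ =>
        ∑ m ∈ Finset.range K,
          AL.term1 u (v / K + m / K + τ * ((K : ℂ) - 1) / (2 * K)) (τ / K) n)
        ⊆ Set.range (fun n : ℤ => (K : ℤ) * n) := by
      intro x hx
      by_contra hmem
      apply hx
      apply AL.sum_term1_eq_zero K hK u v τ x
      rintro ⟨c, hc⟩
      exact hmem ⟨c, hc.symm⟩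
    rw [← Function.Injective.tsum_eq hinj hvanish]
    have : ∀ n : ℤ, ∑ m ∈ Finset.range K,
        AL.term1 u (v / K + m / K + τ * ((K : ℂ) - 1) / (2 * K)) (τ / K) ((K : ℤ) * n)
        = (K : ℂ) * AL.termK K u v τ n := by
      intro n
      rw [Finset.sum_congr rfl (fun m _ => AL.term1_mul_eq K hK u v τ m n)]
      simp [Finset.sum_const, Finset.card_range, nsmul_eq_mul]
    rw [tsum_congr this, tsum_mul_left]
  rw [key, AL.appell_eq]
  have hexp : Complex.exp ((Real.pi : ℂ) * I * ((K : ℂ) - 1) * u) *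
      Complex.exp ((Real.pi : ℂ) * I * u) = Complex.exp ((Real.pi : ℂ) * I * K * u) := by
    rw [← Complex.exp_add]
    congr 1
    ring
  rw [← hexp]
  field_simp
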